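/- In the Ariki-Koike algebra, every symmetric polynomial in L_1, …, L_n is central; in particular L_1 + L_2 + ⋯ + L_n commutes with every generator T_i for 0 ≤ i < n. -/

import Mathlib

noncomputable section

/-- The defining relations of the Ariki-Koike algebra `H_{q,Q}(W_{r,n})`, as
relations on the free `R`-algebra on generators `T_0, …, T_{n-1}`. -/
inductive AKRel (R : Type) [CommRing R] (n r : ℕ) (q : R) (Q : Fin r → R) :
    FreeAlgebra R (Fin n) → FreeAlgebra R (Fin n) → Prop
  | order (h : 0 < n) :
      AKRel R n r q Q
        (((List.finRange r).map fun s =>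
            FreeAlgebra.ι R (⟨0, h⟩ : Fin n) -
              algebraMap R (FreeAlgebra R (Fin n)) (Q s)).prod) 0
  | quad (i : Fin n) (hi : 1 ≤ (i : ℕ)) :
      AKRel R n r q Q
        ((FreeAlgebra.ι R i - algebraMap R (FreeAlgebra R (Fin n)) q) *
          (FreeAlgebra.ι R i + 1)) 0
  | braid01 (h0 : 0 < n) (h1 : 1 < n) :
      AKRel R n r q Q
        (FreeAlgebra.ι R (⟨0, h0⟩ : Fin n) * FreeAlgebra.ι R ⟨1, h1⟩ *
          FreeAlgebra.ι R ⟨0, h0⟩ * FreeAlgebra.ι R ⟨1, h1⟩)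
        (FreeAlgebra.ι R (⟨1, h1⟩ : Fin n) * FreeAlgebra.ι R ⟨0, h0⟩ *
          FreeAlgebra.ι R ⟨1, h1⟩ * FreeAlgebra.ι R ⟨0, h0⟩)
  | comm (i j : Fin n) (hij : (i : ℕ) + 1 < (j : ℕ)) :
      AKRel R n r q Q (FreeAlgebra.ι R i * FreeAlgebra.ι R j)
        (FreeAlgebra.ι R j * FreeAlgebra.ι R i)
  | braid (i j : Fin n) (hi : 1 ≤ (i : ℕ)) (hj : (j : ℕ) = (i : ℕ) + 1) :
      AKRel R n r q Q
        (FreeAlgebra.ι R i * FreeAlgebra.ι R j * FreeAlgebra.ι R i)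
        (FreeAlgebra.ι R j * FreeAlgebra.ι R i * FreeAlgebra.ι R j)

/-- The Ariki-Koike algebra: the quotient of the free algebra on `T_0, …, T_{n-1}`
by the defining relations. -/
abbrev ArikiKoike (R : Type) [CommRing R] (n r : ℕ) (q : R) (Q : Fin r → R) :=
  RingQuot (AKRel R n r q Q)

/-- The generator `T_i` of the Ariki-Koike algebra. -/
def Tgen (R : Type) [CommRing R] (n r : ℕ) (q : R) (Q : Fin r → R) (i : Fin n) :
    ArikiKoike R n r q Q :=
  RingQuot.mkAlgHom R (AKRel R n r q Q) (FreeAlgebra.ι R i)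

/-- `T_i` for a natural number index (junk value `0` for `i ≥ n`). -/
def TgenN (R : Type) [CommRing R] (n r : ℕ) (q : R) (Q : Fin r → R) (i : ℕ) :
    ArikiKoike R n r q Q :=
  if h : i < n then Tgen R n r q Q ⟨i, h⟩ else 0

/-- The elements `L_{k+1} = q^{-k} T_k ⋯ T_1 T_0 T_1 ⋯ T_k` (0-based index `k`). -/
def Lelt (R : Type) [CommRing R] (n r : ℕ) (q : Rˣ) (Q : Fin r → R) :
    ℕ → ArikiKoike R n r (q : R) Q
  | 0 => TgenN R n r (q : R) Q 0
  | (j + 1) =>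
      ((q⁻¹ : Rˣ) : R) •
        (TgenN R n r (q : R) Q (j + 1) * Lelt R n r q Q j * TgenN R n r (q : R) Q (j + 1))

end

noncomputable section

/-- Evaluation of a (multivariate) polynomial at the family `L` of elements of a
(possibly noncommutative) algebra, monomials being read left-to-right. -/
def evalAtL (R : Type) [CommRing R] {A : Type} [Ring A] [Algebra R A]
    (n : ℕ) (L : Fin n → A) (p : MvPolynomial (Fin n) R) : A :=
  (AddMonoidAlgebra.coeff p).sum fun m c => c • ((List.finRange n).map fun k => L k ^ m k).prod

namespace AKaux
variable {R : Type} [CommRing R] {n r : ℕ} {q : Rˣ} {Q : Fin r → R}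

lemma tgenN_eq (i : Fin n) : TgenN R n r (q:R) Q (i:ℕ) = Tgen R n r (q:R) Q i := by
  simp [TgenN]

lemma tgenN_zero {i : ℕ} (h : ¬ i < n) : TgenN R n r (q:R) Q i = 0 := dif_neg h

lemma quad' (i : ℕ) (h1 : 1 ≤ i) (h2 : i < n) :
    TgenN R n r (q:R) Q i * TgenN R n r (q:R) Q i
      = ((q:R) - 1) • TgenN R n r (q:R) Q i + (q:R) • (1 : ArikiKoike R n r (q:R) Q) := by
  have h := RingQuot.mkAlgHom_rel R (AKRel.quad (R := R) (n := n) (r := r) (q := (q:R)) (Q := Q)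
      ⟨i, h2⟩ h1)
  simp only [map_mul, map_sub, map_add, map_one, map_zero, AlgHom.commutes] at h
  have hT : RingQuot.mkAlgHom R (AKRel R n r (q:R) Q) (FreeAlgebra.ι R (⟨i, h2⟩ : Fin n))
      = TgenN R n r (q:R) Q i := (tgenN_eq (q := q) ⟨i, h2⟩).symm
  rw [hT] at h
  rw [Algebra.smul_def, Algebra.smul_def, map_sub, map_one, mul_one]
  rw [sub_mul, sub_eq_zero, mul_add, mul_add, mul_one, mul_one] at h
  rw [sub_one_mul]
  linear_combination (norm := abel) h


lemma comm' (i j : ℕ) (h : i + 1 < j) :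
    TgenN R n r (q:R) Q i * TgenN R n r (q:R) Q j
      = TgenN R n r (q:R) Q j * TgenN R n r (q:R) Q i := by
  by_cases hj : j < n
  · have hi : i < n := lt_trans (lt_trans (Nat.lt_succ_self i) h) hj
    have hrel := RingQuot.mkAlgHom_rel R (AKRel.comm (R := R) (n := n) (r := r) (q := (q:R))
      (Q := Q) ⟨i, hi⟩ ⟨j, hj⟩ h)
    simp only [map_mul] at hrel
    have hTi : RingQuot.mkAlgHom R (AKRel R n r (q:R) Q) (FreeAlgebra.ι R (⟨i, hi⟩ : Fin n))
        = TgenN R n r (q:R) Q i := (tgenN_eq (q := q) ⟨i, hi⟩).symm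
    have hTj : RingQuot.mkAlgHom R (AKRel R n r (q:R) Q) (FreeAlgebra.ι R (⟨j, hj⟩ : Fin n))
        = TgenN R n r (q:R) Q j := (tgenN_eq (q := q) ⟨j, hj⟩).symm
    rw [hTi, hTj] at hrel
    exact hrel
  · rw [tgenN_zero hj, mul_zero, zero_mul]

lemma braid' (i : ℕ) (h1 : 1 ≤ i) :
    TgenN R n r (q:R) Q i * TgenN R n r (q:R) Q (i+1) * TgenN R n r (q:R) Q i
      = TgenN R n r (q:R) Q (i+1) * TgenN R n r (q:R) Q i * TgenN R n r (q:R) Q (i+1) := by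
  by_cases hj : i + 1 < n
  · have hi : i < n := lt_trans (Nat.lt_succ_self i) hj
    have hrel := RingQuot.mkAlgHom_rel R (AKRel.braid (R := R) (n := n) (r := r) (q := (q:R))
      (Q := Q) ⟨i, hi⟩ ⟨i+1, hj⟩ h1 rfl)
    simp only [map_mul] at hrel
    have hTi : RingQuot.mkAlgHom R (AKRel R n r (q:R) Q) (FreeAlgebra.ι R (⟨i, hi⟩ : Fin n))
        = TgenN R n r (q:R) Q i := (tgenN_eq (q := q) ⟨i, hi⟩).symm
    have hTj : RingQuot.mkAlgHom R (AKRel R n r (q:R) Q) (FreeAlgebra.ι R (⟨i+1, hj⟩ : Fin n))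
        = TgenN R n r (q:R) Q (i+1) := (tgenN_eq (q := q) ⟨i+1, hj⟩).symm
    rw [hTi, hTj] at hrel
    exact hrel
  · rw [tgenN_zero hj, mul_zero, zero_mul, mul_zero]

lemma braid01' :
    TgenN R n r (q:R) Q 0 * (TgenN R n r (q:R) Q 1 * TgenN R n r (q:R) Q 0 * TgenN R n r (q:R) Q 1)
      = (TgenN R n r (q:R) Q 1 * TgenN R n r (q:R) Q 0 * TgenN R n r (q:R) Q 1)
        * TgenN R n r (q:R) Q 0 := by
  by_cases h1 : 1 < n
  · have h0 : 0 < n := lt_trans Nat.zero_lt_one h1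
    have hrel := RingQuot.mkAlgHom_rel R (AKRel.braid01 (R := R) (n := n) (r := r) (q := (q:R))
      (Q := Q) h0 h1)
    simp only [map_mul] at hrel
    have hT0 : RingQuot.mkAlgHom R (AKRel R n r (q:R) Q) (FreeAlgebra.ι R (⟨0, h0⟩ : Fin n))
        = TgenN R n r (q:R) Q 0 := (tgenN_eq (q := q) ⟨0, h0⟩).symm
    have hT1 : RingQuot.mkAlgHom R (AKRel R n r (q:R) Q) (FreeAlgebra.ι R (⟨1, h1⟩ : Fin n))
        = TgenN R n r (q:R) Q 1 := (tgenN_eq (q := q) ⟨1, h1⟩).symm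
    rw [hT0, hT1] at hrel
    rw [← mul_assoc, ← mul_assoc, hrel]
  · rw [tgenN_zero h1, zero_mul, mul_zero, zero_mul, mul_zero]

lemma lelt_succ (j : ℕ) : Lelt R n r q Q (j+1)
    = ((q⁻¹ : Rˣ) : R) • (TgenN R n r (q:R) Q (j+1) * Lelt R n r q Q j
        * TgenN R n r (q:R) Q (j+1)) := rfl

lemma comm0 : ∀ j : ℕ, Commute (TgenN R n r (q:R) Q 0) (Lelt R n r q Q j) := by
  intro j
  induction j with
  | zero => exact Commute.refl _
  | succ j ih =>
    rw [lelt_succ]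
    refine Commute.smul_right ?_ _
    match j, ih with
    | 0, _ =>
      show Commute _ (_ * Lelt R n r q Q 0 * _)
      exact braid01' (q := q)
    | (m+1), ih =>
      have hc : Commute (TgenN R n r (q:R) Q 0) (TgenN R n r (q:R) Q (m+2)) :=
        comm' 0 (m+2) (by omega)
      exact (hc.mul_right ih).mul_right hc

lemma commTL : ∀ j i : ℕ, 1 ≤ i → i ≠ j → i ≠ j + 1 →
    Commute (TgenN R n r (q:R) Q i) (Lelt R n r q Q j) := by
  intro j
  induction j using Nat.strong_induction_on with
  | _ j ih =>
  intro i h1 hne1 hne2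
  match j with
  | 0 =>
    show Commute _ (TgenN R n r (q:R) Q 0)
    exact (comm' 0 i (by omega)).symm
  | (j+1) =>
    rw [lelt_succ]
    refine Commute.smul_right ?_ _
    by_cases hij : i = j
    · subst hij
      obtain ⟨m, rfl⟩ : ∃ m, i = m + 1 := ⟨i - 1, by omega⟩
      set a := TgenN R n r (q:R) Q (m+1) with ha
      set b := TgenN R n r (q:R) Q (m+2) with hb
      set C := Lelt R n r q Q m with hC
      have hbC : Commute b C := ih m (by omega) (m+2) (by omega) (by omega) (by omega)
      have hbraid : a * b * a = b * a * b := braid' (m+1) (by omega)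
      have hbr : ∀ x, a*(b*(a*x)) = b*(a*(b*x)) := by
        intro x
        rw [← mul_assoc, ← mul_assoc, ← mul_assoc, ← mul_assoc, hbraid]
      have hbC' : ∀ x, b*(C*x) = C*(b*x) := by
        intro x
        rw [← mul_assoc, ← mul_assoc, hbC.eq]
      have h2 : b*(a*b) = a*(b*a) := by
        have := hbraid.symm
        simpa [mul_assoc] using this
      show Commute a (b * Lelt R n r q Q (m+1) * b)
      rw [lelt_succ]
      rw [mul_smul_comm, smul_mul_assoc]
      refine Commute.smul_right ?_ _
      show a * (b * (a * C * a) * b) = (b * (a * C * a) * b) * a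
      simp only [mul_assoc]
      rw [hbr, hbC', h2]
    · have hLC : Commute (TgenN R n r (q:R) Q i) (Lelt R n r q Q j) :=
        ih j (by omega) i h1 hij (by omega)
      have hT : Commute (TgenN R n r (q:R) Q i) (TgenN R n r (q:R) Q (j+1)) := by
        rcases lt_or_gt_of_ne hne1 with h | h
        · exact comm' i (j+1) (by omega)
        · exact (comm' (j+1) i (by omega)).symm
      exact (hT.mul_right hLC).mul_right hT

lemma lelt_comm_of (x : ArikiKoike R n r (q:R) Q) :
    ∀ a : ℕ, (∀ j, j ≤ a → Commute x (TgenN R n r (q:R) Q j)) →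
    Commute x (Lelt R n r q Q a) := by
  intro a
  induction a with
  | zero => exact fun h => h 0 le_rfl
  | succ a ih =>
    intro h
    rw [lelt_succ]
    refine Commute.smul_right ?_ _
    exact ((h (a+1) le_rfl).mul_right (ih fun j hj => h j (by omega))).mul_right
      (h (a+1) le_rfl)

lemma commLL (a b : ℕ) : Commute (Lelt R n r q Q a) (Lelt R n r q Q b) := by
  suffices H : ∀ a b : ℕ, a < b → Commute (Lelt R n r q Q a) (Lelt R n r q Q b) by
    rcases lt_trichotomy a b with h | rfl | h
    · exact H a b h
    · exact Commute.refl _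
    · exact (H b a h).symm
  intro a b hab
  refine (lelt_comm_of (Lelt R n r q Q b) a fun j hj => ?_).symm
  match j with
  | 0 => exact (comm0 (q := q) b).symm
  | (j+1) => exact (commTL b (j+1) (by omega) (by omega) (by omega)).symm

lemma prod_comm' (m : ℕ) :
    Commute (TgenN R n r (q:R) Q (m+1)) (Lelt R n r q Q m * Lelt R n r q Q (m+1)) := by
  show _ = _
  have step1 : TgenN R n r (q:R) Q (m+1) * (Lelt R n r q Q m * Lelt R n r q Q (m+1))
      = Lelt R n r q Q (m+1) * (Lelt R n r q Q m * TgenN R n r (q:R) Q (m+1)) := by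
    rw [lelt_succ]
    simp only [mul_smul_comm, smul_mul_assoc, mul_assoc]
  rw [step1, ← mul_assoc, ← (commLL (q := q) m (m+1)).eq, mul_assoc]

lemma hXlem (m : ℕ) :
    TgenN R n r (q:R) Q (m+1) * Lelt R n r q Q m * TgenN R n r (q:R) Q (m+1)
      = (q : R) • Lelt R n r q Q (m+1) := by
  rw [lelt_succ, smul_smul]
  simp

lemma q_smul_cancel {x y : ArikiKoike R n r (q:R) Q}
    (h : (q:R) • x = (q:R) • y) : x = y := by
  have := congrArg (fun z => ((q⁻¹ : Rˣ):R) • z) h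
  simpa [smul_smul, Units.inv_mul] using this

lemma sum_comm' (m : ℕ) :
    Commute (TgenN R n r (q:R) Q (m+1)) (Lelt R n r q Q m + Lelt R n r q Q (m+1)) := by
  by_cases hn : m + 1 < n
  · set t := TgenN R n r (q:R) Q (m+1) with ht
    set C := Lelt R n r q Q m with hC
    set D := Lelt R n r q Q (m+1) with hD
    have hq := quad' (q := q) (Q := Q) (m+1) (by omega) hn
    rw [← ht] at hq
    have hqD : t * C * t = (q:R) • D := hXlem m
    have E1 : t * D = ((q:R)-1) • D + C * t := by
      apply q_smul_cancel (q := q)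
      calc (q:R) • (t * D) = t * ((q:R) • D) := (mul_smul_comm _ _ _).symm
        _ = t * (t * C * t) := by rw [hqD]
        _ = (t * t) * (C * t) := by simp only [mul_assoc]
        _ = (((q:R)-1) • t + (q:R) • 1) * (C * t) := by rw [hq]
        _ = ((q:R)-1) • (t * (C * t)) + (q:R) • (C * t) := by
              rw [add_mul, smul_mul_assoc, smul_mul_assoc, one_mul]
        _ = ((q:R)-1) • ((q:R) • D) + (q:R) • (C * t) := by rw [← mul_assoc, hqD]
        _ = (q:R) • (((q:R)-1) • D + C * t) := by rw [smul_add, smul_comm]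
    have E2 : D * t = ((q:R)-1) • D + t * C := by
      apply q_smul_cancel (q := q)
      calc (q:R) • (D * t) = ((q:R) • D) * t := (smul_mul_assoc _ _ _).symm
        _ = (t * C * t) * t := by rw [hqD]
        _ = (t * C) * (t * t) := by simp only [mul_assoc]
        _ = (t * C) * (((q:R)-1) • t + (q:R) • 1) := by rw [hq]
        _ = ((q:R)-1) • (t * C * t) + (q:R) • (t * C) := by
              rw [mul_add, mul_smul_comm, mul_smul_comm, mul_one]
        _ = ((q:R)-1) • ((q:R) • D) + (q:R) • (t * C) := by rw [hqD]
        _ = (q:R) • (((q:R)-1) • D + t * C) := by rw [smul_add, smul_comm]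
    show t * (C + D) = (C + D) * t
    rw [mul_add, add_mul, E1, E2]
    abel
  · rw [tgenN_zero hn]
    exact Commute.zero_left _

lemma pow_sum_comm (m : ℕ) : ∀ k : ℕ,
    Commute (TgenN R n r (q:R) Q (m+1))
      (Lelt R n r q Q m ^ k + Lelt R n r q Q (m+1) ^ k) := by
  have hCD : Commute (Lelt R n r q Q m) (Lelt R n r q Q (m+1)) := commLL m (m+1)
  intro k
  induction k using Nat.strong_induction_on with
  | _ k ih =>
  match k with
  | 0 => simpa using Commute.add_right (Commute.one_right _) (Commute.one_right _)
  | 1 => simpa using sum_comm' (q := q) m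
  | (k+2) =>
    set C := Lelt R n r q Q m
    set D := Lelt R n r q Q (m+1)
    have e1 : C * C^(k+1) = C^(k+2) := (pow_succ' C (k+1)).symm
    have e2 : D * D^(k+1) = D^(k+2) := (pow_succ' D (k+1)).symm
    have e3 : C*D*C^k = D*C^(k+1) := by
      rw [mul_assoc, (hCD.symm.pow_right k).eq, ← mul_assoc, ← pow_succ',
        (hCD.symm.pow_right (k+1)).eq]
    have e4 : C*D*D^k = C*D^(k+1) := by rw [mul_assoc, ← pow_succ']
    have key : C^(k+2) + D^(k+2)
        = (C+D)*(C^(k+1)+D^(k+1)) - (C*D)*(C^k+D^k) := by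
      rw [add_mul, mul_add, mul_add, mul_add, e1, e2, e3, e4]
      abel
    rw [key]
    exact ((sum_comm' m).mul_right (ih (k+1) (by omega))).sub_right
      ((prod_comm' m).mul_right (ih k (by omega)))

lemma pair_comm_aux (m c e : ℕ) :
    Commute (TgenN R n r (q:R) Q (m+1))
      (Lelt R n r q Q m ^ c * Lelt R n r q Q (m+1) ^ (c+e)
        + Lelt R n r q Q m ^ (c+e) * Lelt R n r q Q (m+1) ^ c) := by
  have hCD : Commute (Lelt R n r q Q m) (Lelt R n r q Q (m+1)) := commLL m (m+1)
  set C := Lelt R n r q Q m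
  set D := Lelt R n r q Q (m+1)
  have h1 : C^c*D^c*C^e = C^(c+e)*D^c := by
    rw [mul_assoc, ← (hCD.pow_pow e c).eq, ← mul_assoc, ← pow_add]
  have h2 : C^c*D^c*D^e = C^c*D^(c+e) := by rw [mul_assoc, ← pow_add]
  have key : C^c*D^(c+e) + C^(c+e)*D^c = ((C*D)^c) * (C^e + D^e) := by
    rw [hCD.mul_pow, mul_add, h1, h2, add_comm]
  rw [key]
  exact ((prod_comm' m).pow_right c).mul_right (pow_sum_comm m e)

lemma pair_comm (m c d : ℕ) :
    Commute (TgenN R n r (q:R) Q (m+1))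
      (Lelt R n r q Q m ^ c * Lelt R n r q Q (m+1) ^ d
        + Lelt R n r q Q m ^ d * Lelt R n r q Q (m+1) ^ c) := by
  rcases le_total c d with h | h
  · obtain ⟨e, rfl⟩ := Nat.exists_eq_add_of_le h
    exact pair_comm_aux m c e
  · obtain ⟨e, rfl⟩ := Nat.exists_eq_add_of_le h
    have := pair_comm_aux (n := n) (q := q) (Q := Q) m d e
    rwa [add_comm (Lelt R n r q Q m ^ d * _)] at this




lemma bridge (g : Fin n → ArikiKoike R n r (q:R) Q) (comm) :
    Finset.univ.noncommProd g comm = ((List.finRange n).map g).prod := by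
  rw [Finset.noncommProd]
  exact Multiset.noncommProd_coe ((List.finRange n).map g) _

def fmon (q : Rˣ) (Q : Fin r → R) (m : Fin n →₀ ℕ) : ArikiKoike R n r (q:R) Q :=
  Finset.univ.noncommProd (fun k : Fin n => Lelt R n r q Q (k:ℕ) ^ m k)
    (fun x _ y _ _ => ((commLL (q := q) (x:ℕ) (y:ℕ)).pow_pow _ _))

lemma evalAtL_eq_sum_fmon (p : MvPolynomial (Fin n) R) :
    evalAtL R n (fun k : Fin n => Lelt R n r q Q (k:ℕ)) p
      = (AddMonoidAlgebra.coeff p).sum fun m c => c • fmon q Q m := by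
  unfold evalAtL fmon
  refine Finsupp.sum_congr fun m _ => ?_
  exact congrArg _ (bridge _ _).symm

def restm (a b : Fin n) (q : Rˣ) (Q : Fin r → R) (m : Fin n →₀ ℕ) :
    ArikiKoike R n r (q:R) Q :=
  ((Finset.univ.erase a).erase b).noncommProd (fun k : Fin n => Lelt R n r q Q (k:ℕ) ^ m k)
    (fun x _ y _ _ => ((commLL (q := q) (x:ℕ) (y:ℕ)).pow_pow _ _))

lemma fmon_split (a b : Fin n) (hab : a ≠ b) (m : Fin n →₀ ℕ) :
    fmon q Q m = Lelt R n r q Q (a:ℕ) ^ m a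
      * (Lelt R n r q Q (b:ℕ) ^ m b * restm a b q Q m) := by
  unfold fmon restm
  have hb : b ∈ Finset.univ.erase a :=
    Finset.mem_erase.mpr ⟨Ne.symm hab, Finset.mem_univ b⟩
  have h1 : insert a (insert b ((Finset.univ.erase a).erase b)) = (Finset.univ : Finset (Fin n)) := by
    rw [Finset.insert_erase hb, Finset.insert_erase (Finset.mem_univ a)]
  refine (Finset.noncommProd_congr h1.symm (fun x _ => rfl) _).trans ?_
  refine (Finset.noncommProd_insert_of_notMem _ _ _ _ (by simp [hab])).trans ?_
  exact congrArg (Lelt R n r q Q (a:ℕ) ^ m a * ·)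
    (Finset.noncommProd_insert_of_notMem _ b _ _ (by simp))

lemma helper_pair {A : Type} [Ring A] [Algebra R A] (t x y : A)
    (h : t*(x+y) = (x+y)*t) (c : R) :
    (t*(c•x) - (c•x)*t) + (t*(c•y) - (c•y)*t) = 0 := by
  have h' : t*x+t*y = x*t+y*t := by rw [← mul_add, h, add_mul]
  have inner : (t*x - x*t) + (t*y - y*t) = 0 := by
    linear_combination (norm := abel) h'
  calc (t*(c•x) - (c•x)*t) + (t*(c•y) - (c•y)*t)
      = c • ((t*x - x*t) + (t*y - y*t)) := by
        rw [mul_smul_comm, mul_smul_comm, smul_mul_assoc, smul_mul_assoc, ← smul_sub,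
          ← smul_sub, ← smul_add]
    _ = 0 := by rw [inner, smul_zero]

lemma comm_Tgen_eval (p : MvPolynomial (Fin n) R) (hp : p.IsSymmetric) (i : Fin n) :
    Commute (TgenN R n r (q:R) Q (i:ℕ))
      (evalAtL R n (fun k : Fin n => Lelt R n r q Q (k:ℕ)) p) := by
  classical
  rw [evalAtL_eq_sum_fmon]
  rw [show ((AddMonoidAlgebra.coeff p).sum fun m c => c • fmon q Q m)
      = ∑ m ∈ p.support, MvPolynomial.coeff m p • fmon q Q m from rfl]
  obtain ⟨v, hv⟩ : ∃ v, (i:ℕ) = v := ⟨_, rfl⟩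
  rw [hv]
  rcases v with _ | j
  · -- i = 0
    refine Commute.sum_right _ _ _ fun m _ => Commute.smul_right ?_ _
    unfold fmon
    exact Finset.noncommProd_commute _ _ _ _ fun x _ => (comm0 ((x:Fin n):ℕ)).pow_right _
  · -- i = j+1
    have hj : j + 1 < n := hv ▸ i.isLt
    have hjn : j < n := by omega
    set a : Fin n := ⟨j, hjn⟩ with ha
    have hab : a ≠ i := by
      intro h
      have h2 : (a:ℕ) = (i:ℕ) := congrArg Fin.val h
      have h3 : (a:ℕ) = j := rfl
      rw [hv, h3] at h2
      omega
    set τ : Equiv.Perm (Fin n) := Equiv.swap a i with hτ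
    have happ : ∀ (m : Fin n →₀ ℕ) (k : Fin n), Finsupp.mapDomain τ m k = m (τ k) := by
      intro m k
      rw [show (⇑τ : Fin n → Fin n) = ⇑(τ : Fin n ≃ Fin n) from rfl,
        Finsupp.mapDomain_equiv_apply]
      rw [hτ, Equiv.symm_swap]
    have hcoeff : ∀ m : Fin n →₀ ℕ,
        MvPolynomial.coeff (Finsupp.mapDomain τ m) p = MvPolynomial.coeff m p := by
      intro m
      have h1 := MvPolynomial.coeff_rename_mapDomain (⇑τ) τ.injective p m
      rw [hp τ] at h1
      exact h1
    have hLval : ∀ m : Fin n →₀ ℕ, fmon q Q m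
        = Lelt R n r q Q j ^ m a * (Lelt R n r q Q (j+1) ^ m i * restm a i q Q m) := by
      intro m
      have h1 := fmon_split (q := q) (Q := Q) a i hab m
      rw [hv] at h1
      exact h1
    have hxne : ∀ x : Fin n, x ≠ a → x ≠ i → (x:ℕ) ≠ j ∧ (x:ℕ) ≠ j + 1 := by
      intro x h1 h2
      constructor
      · intro h; exact h1 (Fin.ext h)
      · intro h; exact h2 (Fin.ext (by rw [h, hv]))
    have hrest : ∀ m, Commute (TgenN R n r (q:R) Q (j+1)) (restm a i q Q m) := by
      intro m
      unfold restm
      refine Finset.noncommProd_commute _ _ _ _ fun x hx => ?_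
      simp only [Finset.mem_erase] at hx
      obtain ⟨hx1, hx2⟩ := hxne x hx.2.1 hx.1
      exact (commTL (x:ℕ) (j+1) (by omega) (by omega) (by omega)).pow_right _
    have hfix : ∀ m : Fin n →₀ ℕ, m a = m i →
        Commute (TgenN R n r (q:R) Q (j+1)) (fmon q Q m) := by
      intro m hm
      rw [hLval m, hm, ← mul_assoc, ← Commute.mul_pow (commLL (q := q) j (j+1))]
      exact ((prod_comm' j).pow_right _).mul_right (hrest m)
    have hpair : ∀ m : Fin n →₀ ℕ, Commute (TgenN R n r (q:R) Q (j+1))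
        (fmon q Q m + fmon q Q (Finsupp.mapDomain τ m)) := by
      intro m
      have hres : restm a i q Q (Finsupp.mapDomain τ m) = restm a i q Q m := by
        unfold restm
        refine Finset.noncommProd_congr rfl (fun x hx => ?_) _
        simp only [Finset.mem_erase] at hx
        rw [happ]
        rw [Equiv.swap_apply_of_ne_of_ne hx.2.1 hx.1]
      have hma : Finsupp.mapDomain τ m a = m i := by rw [happ, hτ, Equiv.swap_apply_left]
      have hmi : Finsupp.mapDomain τ m i = m a := by rw [happ, hτ, Equiv.swap_apply_right]
      rw [hLval m, hLval (Finsupp.mapDomain τ m), hres, hma, hmi]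
      rw [show ∀ X Y Z W RR : ArikiKoike R n r (q:R) Q,
        X * (Y * RR) + Z * (W * RR) = (X * Y + Z * W) * RR from
        fun X Y Z W RR => by rw [add_mul, mul_assoc, mul_assoc]]
      exact (pair_comm j _ _).mul_right (hrest m)
    show _ = _
    rw [Finset.mul_sum, Finset.sum_mul, ← sub_eq_zero, ← Finset.sum_sub_distrib]
    refine Finset.sum_involution (fun m _ => Finsupp.mapDomain τ m) ?_ ?_ ?_ ?_
    · intro m hm
      rw [hcoeff m]
      exact helper_pair _ _ _ (hpair m) (MvPolynomial.coeff m p)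
    · intro m hm hne heq
      apply hne
      have hmi : m a = m i := by
        have h1 := congrArg (fun g : Fin n →₀ ℕ => g i) heq
        rw [happ, hτ, Equiv.swap_apply_right] at h1
        exact h1
      rw [mul_smul_comm, smul_mul_assoc, (hfix m hmi).eq, sub_self]
    · intro m hm
      rw [MvPolynomial.mem_support_iff, hcoeff m]
      exact MvPolynomial.mem_support_iff.mp hm
    · intro m hm
      show Finsupp.mapDomain (⇑τ) (Finsupp.mapDomain (⇑τ) m) = m
      rw [← Finsupp.mapDomain_comp]
      have hττ : (⇑τ ∘ ⇑τ : Fin n → Fin n) = id := by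
        funext x
        show τ (τ x) = x
        rw [hτ]
        exact Equiv.swap_apply_self _ _ _
      rw [hττ, Finsupp.mapDomain_id]

lemma central_of_comm_gens (z : ArikiKoike R n r (q:R) Q)
    (h : ∀ i : Fin n, Commute z (Tgen R n r (q:R) Q i)) :
    ∀ y : ArikiKoike R n r (q:R) Q, z * y = y * z := by
  intro y
  obtain ⟨x, rfl⟩ := RingQuot.mkAlgHom_surjective R (AKRel R n r (q:R) Q) y
  induction x using FreeAlgebra.induction with
  | grade0 a =>
    rw [AlgHom.commutes]
    exact (Algebra.commutes a z).symm
  | grade1 i => exact h i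
  | mul x y ihx ihy =>
    rw [map_mul, ← mul_assoc, ihx, mul_assoc, ihy, mul_assoc]
  | add x y ihx ihy =>
    rw [map_add, mul_add, add_mul, ihx, ihy]

lemma evalAtL_add {A : Type} [Ring A] [Algebra R A] (L : Fin n → A)
    (p1 p2 : MvPolynomial (Fin n) R) :
    evalAtL R n L (p1 + p2) = evalAtL R n L p1 + evalAtL R n L p2 := by
  unfold evalAtL
  rw [AddMonoidAlgebra.coeff_add]
  exact Finsupp.sum_add_index' (fun m => zero_smul R _) (fun m c1 c2 => add_smul c1 c2 _)

lemma list_prod_single {A : Type} [Monoid A] (f : Fin n → A) (k : Fin n) :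
    ∀ l : List (Fin n), l.Nodup → k ∈ l →
      (l.map fun j => if k = j then f j else 1).prod = f k := by
  intro l
  induction l with
  | nil => intro _ h; exact absurd h List.not_mem_nil
  | cons hd tl ih =>
    intro hnd hmem
    rw [List.map_cons, List.prod_cons]
    by_cases hk : k = hd
    · subst hk
      rw [if_pos rfl]
      have : ∀ x ∈ tl.map fun j => if k = j then f j else 1, x = 1 := by
        intro x hx
        simp only [List.mem_map] at hx
        obtain ⟨j, hj, rfl⟩ := hx
        rw [if_neg]
        intro hkj
        subst hkj
        exact (List.nodup_cons.mp hnd).1 hj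
      rw [List.prod_eq_one this, mul_one]
    · rw [if_neg hk, one_mul]
      refine ih (List.nodup_cons.mp hnd).2 ?_
      rcases List.mem_cons.mp hmem with h | h
      · exact absurd h hk
      · exact h

lemma evalAtL_X {A : Type} [Ring A] [Algebra R A] (L : Fin n → A) (k : Fin n) :
    evalAtL R n L (MvPolynomial.X k) = L k := by
  unfold evalAtL
  rw [show (MvPolynomial.X k : MvPolynomial (Fin n) R)
      = MvPolynomial.monomial (Finsupp.single k 1) 1 from rfl,
    ← MvPolynomial.single_eq_monomial]
  rw [AddMonoidAlgebra.coeff_single]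
  rw [Finsupp.sum_single_index (by rw [zero_smul])]
  rw [one_smul]
  have hmap : ((List.finRange n).map fun j => L j ^ (Finsupp.single k 1) j)
      = (List.finRange n).map fun j => if k = j then L j else 1 := by
    apply List.map_congr_left
    intro j _
    rw [Finsupp.single_apply]
    split_ifs with h
    · rw [pow_one]
    · rw [pow_zero]
  rw [hmap]
  exact list_prod_single L k (List.finRange n) (List.nodup_finRange n) (List.mem_finRange k)

lemma evalAtL_sumX {A : Type} [Ring A] [Algebra R A] (L : Fin n → A) :
    evalAtL R n L (∑ k : Fin n, MvPolynomial.X k) = ∑ k : Fin n, L k := by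
  classical
  induction (Finset.univ : Finset (Fin n)) using Finset.cons_induction with
  | empty =>
    simp only [Finset.sum_empty]
    unfold evalAtL
    rw [show ((AddMonoidAlgebra.coeff (0 : MvPolynomial (Fin n) R)).sum fun m c =>
      c • ((List.finRange n).map fun k => L k ^ m k).prod) = 0 from Finsupp.sum_zero_index]
  | cons a s ha ih =>
    rw [Finset.sum_cons, Finset.sum_cons, evalAtL_add, evalAtL_X, ih]

lemma sumX_symmetric : (∑ k : Fin n, (MvPolynomial.X k : MvPolynomial (Fin n) R)).IsSymmetric := by
  intro e
  rw [map_sum]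
  simp only [MvPolynomial.rename_X]
  exact Equiv.sum_comp e _

end AKaux

/-- every symmetric polynomial in `L_1, …, L_n` is central in the
Ariki-Koike algebra; in particular `L_1 + ⋯ + L_n` commutes with every generator
`T_i`. -/
theorem symm_poly_Lelt_central (R : Type) [CommRing R] (n r : ℕ) (q : Rˣ) (Q : Fin r → R) :
    (∀ p : MvPolynomial (Fin n) R, p.IsSymmetric →
      ∀ y : ArikiKoike R n r (q : R) Q,
        evalAtL R n (fun k : Fin n => Lelt R n r q Q (k : ℕ)) p * y =
          y * evalAtL R n (fun k : Fin n => Lelt R n r q Q (k : ℕ)) p) ∧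
    (∀ i : Fin n,
      (∑ k : Fin n, Lelt R n r q Q (k : ℕ)) * Tgen R n r (q : R) Q i =
        Tgen R n r (q : R) Q i * ∑ k : Fin n, Lelt R n r q Q (k : ℕ)) := by
  have part1 : ∀ p : MvPolynomial (Fin n) R, p.IsSymmetric →
      ∀ y : ArikiKoike R n r (q : R) Q,
        evalAtL R n (fun k : Fin n => Lelt R n r q Q (k : ℕ)) p * y =
          y * evalAtL R n (fun k : Fin n => Lelt R n r q Q (k : ℕ)) p := by
    intro p hp y
    refine AKaux.central_of_comm_gens _ (fun i => ?_) y
    have h := AKaux.comm_Tgen_eval (q := q) (Q := Q) p hp i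
    rw [AKaux.tgenN_eq (q := q) i] at h
    exact h.symm
  refine ⟨part1, fun i => ?_⟩
  have h := part1 (∑ k : Fin n, MvPolynomial.X k) AKaux.sumX_symmetric
    (Tgen R n r (q : R) Q i)
  rwa [AKaux.evalAtL_sumX] at h

end
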